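/- arXiv:2406.06903 — 5 statements merged into one kernel-verified Lean document; each statement's English description precedes it below -/
import Mathlib

section
/- Let μ be a finite nonnegative measure on [0,∞) with total mass |μ| > 0, and define φ(z) = ∫₀^∞ e^{-tz} dμ(t). Then for all β₁, β₂ ≥ 0 with β₂ > 0, one has (φ(4β₁²) − φ(4β₁² + 4β₂²)) · |μ| ≤ (φ(0) − φ(4β₂²)) · ∫₀^∞ e^{-4β₁² t} dμ(t). -/
open MeasureTheory

/-- Chebyshev's integral inequality for two antitone bounded functions. -/
lemma cheb (μ : Measure ℝ) [IsFiniteMeasure μ] (f g : ℝ → ℝ)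
    (hf : Antitone f) (hg : Antitone g) (hfb : ∀ t, |f t| ≤ 1) (hgb : ∀ t, |g t| ≤ 1) :
    (∫ t, f t ∂μ) * (∫ t, g t ∂μ) ≤ (μ Set.univ).toReal * ∫ t, f t * g t ∂μ := by
  have hfm : Measurable f := hf.measurable
  have hgm : Measurable g := hg.measurable
  have hintf : Integrable f μ := by
    refine (integrable_const (1:ℝ)).mono hfm.aestronglyMeasurable (ae_of_all _ fun t => ?_)
    simpa using hfb t
  have hintg : Integrable g μ := by
    refine (integrable_const (1:ℝ)).mono hgm.aestronglyMeasurable (ae_of_all _ fun t => ?_)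
    simpa using hgb t
  have hintfg : Integrable (fun t => f t * g t) μ := by
    refine (integrable_const (1:ℝ)).mono (hfm.mul hgm).aestronglyMeasurable
      (ae_of_all _ fun t => ?_)
    simp only [Real.norm_eq_abs, abs_mul, norm_one]
    exact mul_le_one₀ (hfb t) (abs_nonneg _) (hgb t)
  have hint1 : Integrable (fun _ : ℝ => (1:ℝ)) μ := integrable_const 1
  have h0 : 0 ≤ ∫ p : ℝ × ℝ, (f p.1 - f p.2) * (g p.1 - g p.2) ∂(μ.prod μ) := by
    refine integral_nonneg fun p => ?_
    rcases le_total p.1 p.2 with h | h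
    · exact mul_nonneg (sub_nonneg.2 (hf h)) (sub_nonneg.2 (hg h))
    · show (0:ℝ) ≤ (f p.1 - f p.2) * (g p.1 - g p.2)
      nlinarith [sub_nonpos.2 (hf h), sub_nonpos.2 (hg h)]
  have hexp : ∫ p : ℝ × ℝ, (f p.1 - f p.2) * (g p.1 - g p.2) ∂(μ.prod μ)
      = (∫ t, f t * g t ∂μ) * (μ Set.univ).toReal
        + (μ Set.univ).toReal * (∫ t, f t * g t ∂μ)
        - (∫ t, f t ∂μ) * (∫ t, g t ∂μ) - (∫ t, g t ∂μ) * (∫ t, f t ∂μ) := by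
    have e1 : ∫ p : ℝ × ℝ, (f p.1 * g p.1) * (1:ℝ) ∂(μ.prod μ)
        = (∫ t, f t * g t ∂μ) * ∫ _t, (1:ℝ) ∂μ := integral_prod_mul (fun t => f t * g t) (fun _ => (1:ℝ))
    have e2 : ∫ p : ℝ × ℝ, (1:ℝ) * (f p.2 * g p.2) ∂(μ.prod μ)
        = (∫ _t, (1:ℝ) ∂μ) * ∫ t, f t * g t ∂μ := integral_prod_mul (fun _ => (1:ℝ)) (fun t => f t * g t)
    have e3 : ∫ p : ℝ × ℝ, f p.1 * g p.2 ∂(μ.prod μ)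
        = (∫ t, f t ∂μ) * ∫ t, g t ∂μ := integral_prod_mul _ _
    have e4 : ∫ p : ℝ × ℝ, g p.1 * f p.2 ∂(μ.prod μ)
        = (∫ t, g t ∂μ) * ∫ t, f t ∂μ := integral_prod_mul _ _
    have i1 : Integrable (fun p : ℝ × ℝ => (f p.1 * g p.1) * (1:ℝ)) (μ.prod μ) :=
      hintfg.mul_prod hint1
    have i2 : Integrable (fun p : ℝ × ℝ => (1:ℝ) * (f p.2 * g p.2)) (μ.prod μ) :=
      hint1.mul_prod hintfg
    have i3 : Integrable (fun p : ℝ × ℝ => f p.1 * g p.2) (μ.prod μ) :=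
      hintf.mul_prod hintg
    have i4 : Integrable (fun p : ℝ × ℝ => g p.1 * f p.2) (μ.prod μ) :=
      hintg.mul_prod hintf
    have i12 : Integrable (fun p : ℝ × ℝ => f p.1 * g p.1 * (1:ℝ) + (1:ℝ) * (f p.2 * g p.2))
        (μ.prod μ) := i1.add i2
    have i123 : Integrable (fun p : ℝ × ℝ =>
        (f p.1 * g p.1 * (1:ℝ) + (1:ℝ) * (f p.2 * g p.2)) - f p.1 * g p.2) (μ.prod μ) :=
      i12.sub i3
    have hfun : (fun p : ℝ × ℝ => (f p.1 - f p.2) * (g p.1 - g p.2))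
        = fun p : ℝ × ℝ => (f p.1 * g p.1 * (1:ℝ) + (1:ℝ) * (f p.2 * g p.2)
          - f p.1 * g p.2) - g p.1 * f p.2 := by
      funext p; ring
    rw [hfun, integral_sub i123 i4, integral_sub i12 i3,
      integral_add i1 i2, e1, e2, e3, e4]
    simp [integral_const, Measure.real]
  rw [hexp] at h0
  nlinarith [h0]

/-- φ(z) = ∫₀^∞ e^{-tz} dμ(t) -/
noncomputable def phi (μ : Measure ℝ) (z : ℝ) : ℝ := ∫ t, Real.exp (-(t * z)) ∂μ

/-- for a finite nonnegative measure μ on [0,∞) with |μ| > 0 and β₁ ≥ 0, β₂ > 0,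
(φ(4β₁²) − φ(4β₁² + 4β₂²))·|μ| ≤ (φ(0) − φ(4β₂²))·∫₀^∞ e^{-4β₁² t} dμ(t). -/
theorem stmt2 (μ : Measure ℝ) [IsFiniteMeasure μ] (hsupp : μ (Set.Iio 0) = 0)
    (hpos : 0 < (μ Set.univ).toReal) (β₁ β₂ : ℝ) (hβ₁ : 0 ≤ β₁) (hβ₂ : 0 < β₂) :
    (phi μ (4 * β₁ ^ 2) - phi μ (4 * β₁ ^ 2 + 4 * β₂ ^ 2)) * (μ Set.univ).toReal
      ≤ (phi μ 0 - phi μ (4 * β₂ ^ 2)) * ∫ t, Real.exp (-(4 * β₁ ^ 2 * t)) ∂μ := by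
  set a := 4 * β₁ ^ 2 with ha
  set b := 4 * β₂ ^ 2 with hb
  have ha0 : 0 ≤ a := by positivity
  have hb0 : 0 ≤ b := by positivity
  set f : ℝ → ℝ := fun t => Real.exp (-(a * max t 0)) with hfdef
  set g : ℝ → ℝ := fun t => Real.exp (-(b * max t 0)) with hgdef
  have hanti : ∀ c : ℝ, 0 ≤ c → Antitone (fun t => Real.exp (-(c * max t 0))) := by
    intro c hc s t hst
    exact Real.exp_le_exp.2 (neg_le_neg (mul_le_mul_of_nonneg_left
      (max_le_max hst le_rfl) hc))
  have hbd : ∀ c : ℝ, 0 ≤ c → ∀ t : ℝ, |Real.exp (-(c * max t 0))| ≤ 1 := by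
    intro c hc t
    rw [abs_of_pos (Real.exp_pos _)]
    exact Real.exp_le_one_iff.2 (neg_nonpos.2 (by positivity))
  -- a.e. nonnegativity
  have hae : ∀ᵐ t ∂μ, 0 ≤ t := by
    rw [ae_iff]
    simp only [not_le]
    exact hsupp
  have hcongr : ∀ c : ℝ, ∫ t, Real.exp (-(t * c)) ∂μ = ∫ t, Real.exp (-(c * max t 0)) ∂μ := by
    intro c
    refine integral_congr_ae (hae.mono fun t ht => ?_)
    simp only [max_eq_left ht, mul_comm]
  have hphia : phi μ a = ∫ t, f t ∂μ := hcongr a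
  have hphib : phi μ b = ∫ t, g t ∂μ := hcongr b
  have hphi0 : phi μ 0 = (μ Set.univ).toReal := by
    simp [phi, integral_const, Measure.real]
  have hphiab : phi μ (a + b) = ∫ t, f t * g t ∂μ := by
    rw [phi]
    refine integral_congr_ae (hae.mono fun t ht => ?_)
    rw [hfdef, hgdef]
    simp only [max_eq_left ht, ← Real.exp_add]
    ring_nf
  have hint : (∫ t, Real.exp (-(a * t)) ∂μ) = ∫ t, f t ∂μ := by
    refine integral_congr_ae (hae.mono fun t ht => ?_)
    simp [hfdef, max_eq_left ht]
  have key := cheb μ f g (hanti a ha0) (hanti b hb0) (hbd a ha0) (hbd b hb0)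
  rw [hphia, hphiab, hphi0, hphib, hint]
  nlinarith [key]
end

section
/- Let φ(z) = ∫₀^∞ e^{-tz} dμ(t) with μ a finite nonnegative measure on [0,∞), μ((0,∞)) > 0, and suppose Δ₁ > Δ₂ > 0. Then for every fixed β₂ ≥ 0, the map β₁ ↦ L_Δ(β₁, β₂) = (φ(0) − φ(4β₁² + 4β₂²))(Δ₁² + Δ₂²) − (φ(4β₁²) − φ(4β₂²))(Δ₁² − Δ₂²) is strictly increasing on [0,∞). -/
open MeasureTheory

/-- L_Δ(β) = (φ(0) − φ(4β₁² + 4β₂²))(Δ₁² + Δ₂²) − (φ(4β₁²) − φ(4β₂²))(Δ₁² − Δ₂²). -/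
noncomputable def L (φ : ℝ → ℝ) (Δ₁ Δ₂ β₁ β₂ : ℝ) : ℝ :=
  (φ 0 - φ (4 * β₁ ^ 2 + 4 * β₂ ^ 2)) * (Δ₁ ^ 2 + Δ₂ ^ 2)
    - (φ (4 * β₁ ^ 2) - φ (4 * β₂ ^ 2)) * (Δ₁ ^ 2 - Δ₂ ^ 2)

lemma ae_nonneg_of_supp (μ : Measure ℝ) (hsupp : μ (Set.Iio 0) = 0) :
    ∀ᵐ t ∂μ, 0 ≤ t := by
  rw [ae_iff]
  convert hsupp using 2
  ext t
  simp [Set.Iio, not_le]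

lemma integrable_exp_neg (μ : Measure ℝ) [IsFiniteMeasure μ] (hsupp : μ (Set.Iio 0) = 0)
    (z : ℝ) (hz : 0 ≤ z) : Integrable (fun t => Real.exp (-(t * z))) μ := by
  refine Integrable.mono' (integrable_const 1)
    ((Real.continuous_exp.comp (by continuity)).aestronglyMeasurable) ?_
  filter_upwards [ae_nonneg_of_supp μ hsupp] with t ht
  rw [Real.norm_eq_abs, abs_of_pos (Real.exp_pos _)]
  exact Real.exp_le_one_iff.2 (by nlinarith)

lemma phi_strict (μ : Measure ℝ) [IsFiniteMeasure μ] (hsupp : μ (Set.Iio 0) = 0)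
    (hpos : 0 < μ (Set.Ioi 0)) {u v : ℝ} (hu : 0 ≤ u) (huv : u < v) :
    phi μ v < phi μ u := by
  have hv : (0:ℝ) ≤ v := hu.trans huv.le
  have hint_u := integrable_exp_neg μ hsupp u hu
  have hint_v := integrable_exp_neg μ hsupp v hv
  have hsub : phi μ u - phi μ v
      = ∫ t, (Real.exp (-(t * u)) - Real.exp (-(t * v))) ∂μ := by
    rw [phi, phi, integral_sub hint_u hint_v]
  have hae : ∀ᵐ t ∂μ, 0 ≤ Real.exp (-(t * u)) - Real.exp (-(t * v)) := by
    filter_upwards [ae_nonneg_of_supp μ hsupp] with t ht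
    have : Real.exp (-(t * v)) ≤ Real.exp (-(t * u)) :=
      Real.exp_le_exp.2 (by nlinarith)
    linarith
  have hintf : Integrable (fun t => Real.exp (-(t * u)) - Real.exp (-(t * v))) μ :=
    hint_u.sub hint_v
  have hgt : 0 < ∫ t, (Real.exp (-(t * u)) - Real.exp (-(t * v))) ∂μ := by
    rw [integral_pos_iff_support_of_nonneg_ae hae hintf]
    refine lt_of_lt_of_le hpos (measure_mono ?_)
    intro t ht
    simp only [Function.mem_support]
    have h1 : Real.exp (-(t * v)) < Real.exp (-(t * u)) := by
      apply Real.exp_lt_exp.2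
      have : (0:ℝ) < t := ht
      nlinarith
    exact sub_ne_zero.2 h1.ne'
  linarith [hsub ▸ hgt]

/-- with φ(z) = ∫₀^∞ e^{-tz} dμ(t), μ finite nonnegative on [0,∞) not
concentrated at 0, and Δ₁ > Δ₂ > 0, for every fixed β₂ ≥ 0 the map β₁ ↦ L_Δ(β₁,β₂) is
strictly increasing on [0,∞). -/
theorem stmt10 (μ : Measure ℝ) [IsFiniteMeasure μ] (hsupp : μ (Set.Iio 0) = 0)
    (hpos : 0 < μ (Set.Ioi 0)) (Δ₁ Δ₂ : ℝ) (h12 : Δ₂ < Δ₁) (h2 : 0 < Δ₂)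
    (β₂ : ℝ) (hβ₂ : 0 ≤ β₂) :
    StrictMonoOn (fun β₁ => L (phi μ) Δ₁ Δ₂ β₁ β₂) (Set.Ici 0) := by
  intro a ha b hb hab
  simp only [L]
  have ha' : (0:ℝ) ≤ a := ha
  have hx : 4 * a ^ 2 < 4 * b ^ 2 := by nlinarith
  have h1 : phi μ (4 * b ^ 2 + 4 * β₂ ^ 2) < phi μ (4 * a ^ 2 + 4 * β₂ ^ 2) :=
    phi_strict μ hsupp hpos (by positivity) (by linarith)
  have h3 : phi μ (4 * b ^ 2) < phi μ (4 * a ^ 2) :=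
    phi_strict μ hsupp hpos (by positivity) hx
  have hA : 0 < Δ₁ ^ 2 - Δ₂ ^ 2 := by nlinarith
  have hB : 0 < Δ₁ ^ 2 + Δ₂ ^ 2 := by positivity
  nlinarith [mul_pos (sub_pos.2 h1) hB, mul_pos (sub_pos.2 h3) hA]
end

section
/- With φ(z) = ∫₀^∞ e^{-tz} dμ(t), μ finite nonnegative with μ((0,∞))>0, and for any β₁ ≥ 0, β₂ > 0: the ratio (φ(4β₁²) − φ(4β₁² + 4β₂²))/(φ(0) − φ(4β₂²)) is well-defined (denominator positive) and is at most (1/|μ|)∫₀^∞ e^{-4β₁² t} dμ(t). -/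
open MeasureTheory

lemma integrable_exp_neg_mul (μ : Measure ℝ) [IsFiniteMeasure μ] (hsupp : μ (Set.Iio 0) = 0)
    {c : ℝ} (hc : 0 ≤ c) : Integrable (fun t => Real.exp (-(c * t))) μ := by
  have h0 : ∀ᵐ t ∂μ, 0 ≤ t := by
    rw [ae_iff]
    simpa [Set.Iio, not_le] using hsupp
  refine Integrable.mono' (integrable_const 1)
    ((Real.continuous_exp.comp (continuous_const.mul continuous_id).neg).aestronglyMeasurable) ?_
  filter_upwards [h0] with t ht
  rw [Real.norm_eq_abs, abs_of_pos (Real.exp_pos _)]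
  exact Real.exp_le_one_iff.2 (neg_nonpos.2 (mul_nonneg hc ht))

/-- with φ(z) = ∫₀^∞ e^{-tz} dμ(t), μ finite nonnegative with μ((0,∞)) > 0,
for β₁ ≥ 0 and β₂ > 0, the denominator φ(0) − φ(4β₂²) is positive and
(φ(4β₁²) − φ(4β₁² + 4β₂²))/(φ(0) − φ(4β₂²)) ≤ (1/|μ|)∫₀^∞ e^{-4β₁²t} dμ(t). -/
theorem stmt13 (μ : Measure ℝ) [IsFiniteMeasure μ] (hsupp : μ (Set.Iio 0) = 0)
    (hpos : 0 < μ (Set.Ioi 0)) (β₁ β₂ : ℝ) (hβ₁ : 0 ≤ β₁) (hβ₂ : 0 < β₂) :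
    0 < phi μ 0 - phi μ (4 * β₂ ^ 2) ∧
    (phi μ (4 * β₁ ^ 2) - phi μ (4 * β₁ ^ 2 + 4 * β₂ ^ 2)) / (phi μ 0 - phi μ (4 * β₂ ^ 2))
      ≤ (1 / (μ Set.univ).toReal) * ∫ t, Real.exp (-(4 * β₁ ^ 2 * t)) ∂μ := by
  have h0 : ∀ᵐ t ∂μ, 0 ≤ t := by
    rw [ae_iff]
    simpa [Set.Iio, not_le] using hsupp
  set a : ℝ := 4 * β₁ ^ 2 with ha
  set b : ℝ := 4 * β₂ ^ 2 with hb
  have ha0 : 0 ≤ a := by positivity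
  have hb0 : 0 < b := by positivity
  set f : ℝ → ℝ := fun t => Real.exp (-(a * t)) with hfdef
  set g : ℝ → ℝ := fun t => Real.exp (-(b * t)) with hgdef
  have hf : Integrable f μ := integrable_exp_neg_mul μ hsupp ha0
  have hg : Integrable g μ := integrable_exp_neg_mul μ hsupp hb0.le
  have hfg_eq : ∀ t, f t * g t = Real.exp (-((a + b) * t)) := by
    intro t
    rw [hfdef, hgdef, ← Real.exp_add]
    ring_nf
  have hfg : Integrable (fun t => f t * g t) μ := by
    have := integrable_exp_neg_mul μ hsupp (show (0:ℝ) ≤ a + b by positivity)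
    exact this.congr (Filter.Eventually.of_forall fun t => (hfg_eq t).symm)
  set M : ℝ := (μ Set.univ).toReal with hMdef
  have hM : 0 < M := by
    refine ENNReal.toReal_pos ?_ (measure_ne_top μ _)
    exact fun h => absurd (measure_mono_null (Set.subset_univ _) h) hpos.ne'
  set F : ℝ := ∫ t, f t ∂μ with hFdef
  set G : ℝ := ∫ t, g t ∂μ with hGdef
  set I : ℝ := ∫ t, f t * g t ∂μ with hIdef
  have hphi0 : phi μ 0 = M := by simp [phi, hMdef, Measure.real]
  have hphia : phi μ a = F := by
    rw [phi, hFdef]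
    exact integral_congr_ae (Filter.Eventually.of_forall fun t => by rw [hfdef]; ring_nf)
  have hphib : phi μ b = G := by
    rw [phi, hGdef]
    exact integral_congr_ae (Filter.Eventually.of_forall fun t => by rw [hgdef]; ring_nf)
  have hphiab : phi μ (a + b) = I := by
    rw [phi, hIdef]
    refine integral_congr_ae (Filter.Eventually.of_forall fun t => ?_)
    show Real.exp (-(t * (a + b))) = f t * g t
    rw [hfg_eq t]
    ring_nf
  -- Chebyshev correlation inequality: F * G ≤ M * I
  have key : F * G ≤ M * I := by
    have hψ : ∀ s, 0 ≤ ∫ t, (f s - f t) * (g s - g t) ∂μ := by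
      intro s
      refine integral_nonneg fun t => ?_
      rcases le_total s t with h | h
      · have h1 : f t ≤ f s := Real.exp_le_exp.2 (by nlinarith)
        have h2 : g t ≤ g s := Real.exp_le_exp.2 (by nlinarith)
        simp only [Pi.zero_apply]
        nlinarith
      · have h1 : f s ≤ f t := Real.exp_le_exp.2 (by nlinarith)
        have h2 : g s ≤ g t := Real.exp_le_exp.2 (by nlinarith)
        simp only [Pi.zero_apply]
        nlinarith
    have expand : ∀ s : ℝ, ∫ t, (f s - f t) * (g s - g t) ∂μ
        = M * (f s * g s) - G * f s - F * g s + I := by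
      intro s
      have i1 : Integrable (fun _ : ℝ => f s * g s) μ := integrable_const _
      have i2 : Integrable (fun t => f s * g t) μ := hg.const_mul _
      have i3 : Integrable (fun t => g s * f t) μ := hf.const_mul _
      have i12 : Integrable (fun t => f s * g s - f s * g t) μ := i1.sub i2
      have i123 : Integrable (fun t => f s * g s - f s * g t - g s * f t) μ := i12.sub i3
      calc ∫ t, (f s - f t) * (g s - g t) ∂μ
          = ∫ t, (f s * g s - f s * g t - g s * f t) + f t * g t ∂μ := by
            congr 1; funext t; ring
        _ = ((∫ _t : ℝ, f s * g s ∂μ) - ∫ t, f s * g t ∂μ) - (∫ t, g s * f t ∂μ)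
              + ∫ t, f t * g t ∂μ := by
            rw [integral_add i123 hfg, integral_sub i12 i3, integral_sub i1 i2]
        _ = M * (f s * g s) - G * f s - F * g s + I := by
            simp only [integral_const_mul, integral_const]
            simp only [smul_eq_mul, Measure.real, ← hMdef, ← hFdef, ← hGdef, ← hIdef]
            ring
    have hψ' : ∀ s, 0 ≤ M * (f s * g s) - G * f s - F * g s + I :=
      fun s => (expand s) ▸ hψ s
    have j1 : Integrable (fun s => M * (f s * g s)) μ := hfg.const_mul _
    have j2 : Integrable (fun s => G * f s) μ := hf.const_mul _
    have j3 : Integrable (fun s => F * g s) μ := hg.const_mul _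
    have j12 : Integrable (fun s => M * (f s * g s) - G * f s) μ := j1.sub j2
    have j123 : Integrable (fun s => M * (f s * g s) - G * f s - F * g s) μ := j12.sub j3
    have total : 0 ≤ ∫ s, (M * (f s * g s) - G * f s - F * g s + I) ∂μ :=
      integral_nonneg hψ'
    have hcalc : ∫ s, (M * (f s * g s) - G * f s - F * g s + I) ∂μ
        = M * I - G * F - F * G + I * M := by
      calc ∫ s, (M * (f s * g s) - G * f s - F * g s + I) ∂μ
          = ((∫ s, M * (f s * g s) ∂μ) - ∫ s, G * f s ∂μ) - (∫ s, F * g s ∂μ)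
              + ∫ _s : ℝ, I ∂μ := by
            rw [integral_add j123 (integrable_const I), integral_sub j12 j3,
              integral_sub j1 j2]
        _ = M * I - G * F - F * G + I * M := by
            simp only [integral_const_mul, integral_const]
            simp only [smul_eq_mul, Measure.real, ← hMdef, ← hFdef, ← hGdef, ← hIdef]
            ring
    rw [hcalc] at total
    linarith
  -- denominator positive
  have hD : 0 < M - G := by
    have hMeq : M - G = ∫ t, (1 - g t) ∂μ := by
      rw [integral_sub (integrable_const 1) hg, integral_const]
      simp [hMdef, hGdef, Measure.real]
    rw [hMeq]
    refine (integral_pos_iff_support_of_nonneg_ae ?_ ((integrable_const 1).sub hg)).2 ?_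
    · filter_upwards [h0] with t ht
      have : g t ≤ 1 := Real.exp_le_one_iff.2 (neg_nonpos.2 (mul_nonneg hb0.le ht))
      simpa using this
    · refine lt_of_lt_of_le hpos (measure_mono fun t ht => ?_)
      have ht' : (0:ℝ) < t := ht
      have hlt : g t < 1 := by
        rw [hgdef]
        exact Real.exp_lt_one_iff.2 (by nlinarith)
      simp only [Function.mem_support]
      exact sub_ne_zero.2 hlt.ne'
  have hFnn : 0 ≤ F := integral_nonneg fun t => (Real.exp_pos _).le
  constructor
  · rw [hphi0, hphib]; exact hD
  · rw [hphia, hphiab, hphi0, hphib, div_le_iff₀ hD]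
    rw [show (1 / M) * F * (M - G) = F * (M - G) / M by ring, le_div_iff₀ hM]
    nlinarith [key]
end

section
/- Let (X,Y), (X',Y') be i.i.d. from P_Δ and let k_Y(y,y') = φ_Y(yy') be a kernel on {±1} with φ_Y(1) > φ_Y(−1). Define HSIC(βX; Y) = E[k(β⊙X, β⊙X')k_Y(Y,Y')] + E[k(β⊙X, β⊙X')]E[k_Y(Y,Y')] − 2E[E[k(β⊙X, β⊙X')|X']E[k_Y(Y,Y')|Y']] with k(u,v) = φ(‖u−v‖²). Then HSIC(β⊙X; Y) = (1/8)(φ_Y(1) − φ_Y(−1)) · L_Δ(β), where L_Δ(β) = (φ(0) − φ(4β₁² + 4β₂²))(Δ₁² + Δ₂²) − (φ(4β₁²) − φ(4β₂²))(Δ₁² − Δ₂²). -/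
/-- The sign set {−1, 1}. -/
noncomputable def Sg : Finset ℝ := {-1, 1}

/-- The probability mass function P_Δ(x₁,x₂,y) = (1/8)(1 + Δ₁x₁y)(1 + Δ₂x₂y) on {±1}³. -/
noncomputable def Pd (Δ₁ Δ₂ x₁ x₂ y : ℝ) : ℝ := 1 / 8 * (1 + Δ₁ * x₁ * y) * (1 + Δ₂ * x₂ * y)

/-- Marginal of (X₁,X₂) under P_Δ. -/
noncomputable def Pm (Δ₁ Δ₂ x₁ x₂ : ℝ) : ℝ := Pd Δ₁ Δ₂ x₁ x₂ 1 + Pd Δ₁ Δ₂ x₁ x₂ (-1)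

/-- The kernel value k(β⊙x, β⊙x') = φ(‖β⊙x − β⊙x'‖²). -/
noncomputable def kB (φ : ℝ → ℝ) (β₁ β₂ x₁ x₂ x₁' x₂' : ℝ) : ℝ :=
  φ ((β₁ * x₁ - β₁ * x₁') ^ 2 + (β₂ * x₂ - β₂ * x₂') ^ 2)

/-- with (X,Y), (X',Y') i.i.d. from P_Δ and k_Y(y,y') = φ_Y(yy') with
φ_Y(1) > φ_Y(−1), HSIC(β⊙X; Y) = E[k k_Y] + E[k]E[k_Y] − 2E[E[k|X']E[k_Y|Y']]
equals (1/8)(φ_Y(1) − φ_Y(−1))·L_Δ(β).  All expectations are written as finite sums with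
weights P_Δ.  Here E[Y=y] has probability 1/2 for each sign. -/
theorem stmt14 (φ φY : ℝ → ℝ) (Δ₁ Δ₂ β₁ β₂ : ℝ)
    (hΔ₁ : Δ₁ ∈ Set.Icc (0:ℝ) 1) (hΔ₂ : Δ₂ ∈ Set.Icc (0:ℝ) 1) (hY : φY (-1) < φY 1) :
    (∑ x₁ ∈ Sg, ∑ x₂ ∈ Sg, ∑ y ∈ Sg, ∑ x₁' ∈ Sg, ∑ x₂' ∈ Sg, ∑ y' ∈ Sg,
        Pd Δ₁ Δ₂ x₁ x₂ y * Pd Δ₁ Δ₂ x₁' x₂' y'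
          * (kB φ β₁ β₂ x₁ x₂ x₁' x₂' * φY (y * y')))
    + (∑ x₁ ∈ Sg, ∑ x₂ ∈ Sg, ∑ y ∈ Sg, ∑ x₁' ∈ Sg, ∑ x₂' ∈ Sg, ∑ y' ∈ Sg,
        Pd Δ₁ Δ₂ x₁ x₂ y * Pd Δ₁ Δ₂ x₁' x₂' y' * kB φ β₁ β₂ x₁ x₂ x₁' x₂')
      * (∑ y ∈ Sg, ∑ y' ∈ Sg, 1 / 2 * (1 / 2) * φY (y * y'))
    - 2 * (∑ x₁' ∈ Sg, ∑ x₂' ∈ Sg, ∑ y' ∈ Sg, Pd Δ₁ Δ₂ x₁' x₂' y'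
        * ((∑ x₁ ∈ Sg, ∑ x₂ ∈ Sg, Pm Δ₁ Δ₂ x₁ x₂ * kB φ β₁ β₂ x₁ x₂ x₁' x₂')
          * (∑ y ∈ Sg, 1 / 2 * φY (y * y'))))
    = 1 / 8 * (φY 1 - φY (-1)) * L φ Δ₁ Δ₂ β₁ β₂ := by
  simp only [Sg, Pd, Pm, kB, L, Finset.sum_insert (by norm_num : (-1:ℝ) ∉ ({1}:Finset ℝ)), Finset.sum_singleton]
  ring_nf
end

section
/- Let φ(z) = ∫₀^∞ e^{-tz} dμ(t), μ finite nonnegative with μ((0,∞)) > 0, and suppose 1 > Δ₁ > Δ₂ > 0 satisfy (1/|μ|)∫₀^∞ e^{-4t} dμ(t) < (Δ₁² − Δ₂²)/(Δ₁² + Δ₂²). Then among the four values L_Δ(0,0), L_Δ(1,0), L_Δ(0,1), L_Δ(1,1) (corresponding to the HSIC of the four feature subsets ∅, {1}, {2}, {1,2} under P_Δ), the unique maximum is attained at L_Δ(1,0). In particular L_Δ(1,0) > L_Δ(1,1), L_Δ(1,0) > L_Δ(0,1), and L_Δ(1,0) > L_Δ(0,0). -/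
open MeasureTheory

section Aux

variable {μ : Measure ℝ} [IsFiniteMeasure μ]

lemma ae_nonneg (hsupp : μ (Set.Iio 0) = 0) : ∀ᵐ t ∂μ, (0:ℝ) ≤ t := by
  rw [MeasureTheory.ae_iff]
  convert hsupp using 2
  ext t
  simp [Set.Iio, not_le]

lemma integrable_exp_aux (hsupp : μ (Set.Iio 0) = 0) {z : ℝ} (hz : 0 ≤ z) :
    Integrable (fun t => Real.exp (-(t * z))) μ := by
  refine Integrable.mono' (integrable_const (1:ℝ)) ?_ ?_
  · exact (Real.measurable_exp.comp (measurable_id.mul_const z).neg).aestronglyMeasurable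
  · filter_upwards [ae_nonneg hsupp] with t ht
    rw [Real.norm_eq_abs, abs_of_nonneg (Real.exp_pos _).le]
    exact Real.exp_le_one_iff.mpr (neg_nonpos.mpr (mul_nonneg ht hz))

end Aux

/-- if 1 > Δ₁ > Δ₂ > 0 satisfy (1/|μ|)∫₀^∞ e^{-4t} dμ(t) < (Δ₁²−Δ₂²)/(Δ₁²+Δ₂²),
then among L_Δ(0,0), L_Δ(1,0), L_Δ(0,1), L_Δ(1,1) (the HSIC values of the four feature
subsets ∅, {1}, {2}, {1,2} up to a positive factor), the unique maximum is L_Δ(1,0). -/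
theorem stmt17 (μ : Measure ℝ) [IsFiniteMeasure μ] (hsupp : μ (Set.Iio 0) = 0)
    (hpos : 0 < μ (Set.Ioi 0)) (Δ₁ Δ₂ : ℝ) (hΔ₁ : Δ₁ < 1) (h12 : Δ₂ < Δ₁) (h2 : 0 < Δ₂)
    (hcond : (1 / (μ Set.univ).toReal) * ∫ t, Real.exp (-(4 * t)) ∂μ
      < (Δ₁ ^ 2 - Δ₂ ^ 2) / (Δ₁ ^ 2 + Δ₂ ^ 2)) :
    L (phi μ) Δ₁ Δ₂ 1 0 > L (phi μ) Δ₁ Δ₂ 1 1 ∧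
    L (phi μ) Δ₁ Δ₂ 1 0 > L (phi μ) Δ₁ Δ₂ 0 1 ∧
    L (phi μ) Δ₁ Δ₂ 1 0 > L (phi μ) Δ₁ Δ₂ 0 0 := by
  have hΔ1 : 0 < Δ₁ := h2.trans h12
  have hA : (0:ℝ) < Δ₁ ^ 2 := pow_pos hΔ1 2
  have hB : (0:ℝ) < Δ₂ ^ 2 := by positivity
  have hAB : Δ₂ ^ 2 < Δ₁ ^ 2 := by nlinarith
  set a := phi μ 0 with ha_def
  set b := phi μ 4 with hb_def
  set c := phi μ 8 with hc_def
  -- a = total mass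
  have ha_eq : a = (μ Set.univ).toReal := by
    rw [ha_def, phi]
    simp; rfl
  have ha : 0 < a := by
    rw [ha_eq]
    refine ENNReal.toReal_pos ?_ (measure_ne_top μ _)
    exact fun h => (lt_irrefl 0 (h ▸ (lt_of_lt_of_le hpos (measure_mono (Set.subset_univ _))))).elim
  have hint4 : Integrable (fun t => Real.exp (-(t * 4))) μ :=
    integrable_exp_aux hsupp (by norm_num)
  have hint8 : Integrable (fun t => Real.exp (-(t * 8))) μ :=
    integrable_exp_aux hsupp (by norm_num)
  have hb0 : 0 ≤ b := integral_nonneg fun t => (Real.exp_pos _).le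
  have hc0 : 0 ≤ c := integral_nonneg fun t => (Real.exp_pos _).le
  -- a - b > 0
  have hab : 0 < a - b := by
    have h1 : a - b = ∫ t, (1 - Real.exp (-(t * 4))) ∂μ := by
      rw [integral_sub (integrable_const (1:ℝ)) hint4, integral_const, smul_eq_mul, mul_one,
        ha_eq, hb_def, phi]
      rfl
    rw [h1]
    rw [integral_pos_iff_support_of_nonneg_ae ?_ ?_]
    · refine lt_of_lt_of_le hpos (measure_mono ?_)
      intro t ht
      have ht' : (0:ℝ) < t := ht
      simp only [Function.mem_support]
      have : Real.exp (-(t * 4)) < 1 := by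
        rw [Real.exp_lt_one_iff]; nlinarith
      intro h; nlinarith
    · filter_upwards [ae_nonneg hsupp] with t ht
      have : Real.exp (-(t * 4)) ≤ 1 := Real.exp_le_one_iff.mpr (by nlinarith)
      simp only [Pi.zero_apply]; linarith
    · exact (integrable_const (1:ℝ)).sub hint4
  -- Cauchy-Schwarz: b^2 ≤ a * c
  have hcs : b ^ 2 ≤ a * c := by
    have hnn : 0 ≤ ∫ t, (Real.exp (-(t * 4)) - b / a) ^ 2 ∂μ :=
      integral_nonneg fun t => sq_nonneg _
    have hexpand : ∀ t : ℝ, (Real.exp (-(t * 4)) - b / a) ^ 2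
        = Real.exp (-(t * 8)) - (2 * (b / a)) * Real.exp (-(t * 4)) + (b / a) ^ 2 := by
      intro t
      have h8 : Real.exp (-(t * 8)) = Real.exp (-(t * 4)) ^ 2 := by
        rw [← Real.exp_nat_mul]; ring_nf
      rw [h8]; ring
    have hI : Integrable (fun t => Real.exp (-(t * 8)) - 2 * (b / a) * Real.exp (-(t * 4))) μ :=
      hint8.sub (hint4.const_mul _)
    have hintexp : ∫ t, (Real.exp (-(t * 4)) - b / a) ^ 2 ∂μ
        = c - (2 * (b / a)) * b + (b / a) ^ 2 * a := by
      simp_rw [hexpand]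
      have hbi : (∫ t, Real.exp (-(t * 4)) ∂μ) = b := rfl
      have hci : (∫ t, Real.exp (-(t * 8)) ∂μ) = c := rfl
      rw [integral_add hI (integrable_const _),
        integral_sub hint8 (hint4.const_mul _), integral_const_mul, integral_const,
        hbi, hci, smul_eq_mul, measureReal_def, ← ha_eq]
      ring
    rw [hintexp] at hnn
    have h1 : c - (2 * (b / a)) * b + (b / a) ^ 2 * a = c - b ^ 2 / a := by
      field_simp; ring
    rw [h1] at hnn
    rw [← sub_nonneg]
    have := mul_nonneg (le_of_lt ha) hnn
    calc (0:ℝ) ≤ a * (c - b ^ 2 / a) := this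
      _ = a * c - b ^ 2 := by field_simp
  -- rewrite hcond
  have hcond' : b * (Δ₁ ^ 2 + Δ₂ ^ 2) < a * (Δ₁ ^ 2 - Δ₂ ^ 2) := by
    have hbeq : (∫ t, Real.exp (-(4 * t)) ∂μ) = b := by
      rw [hb_def, phi]; congr 1; funext t; rw [mul_comm]
    rw [hbeq, ← ha_eq, one_div, inv_mul_eq_div, div_lt_div_iff₀ ha (by positivity)] at hcond
    linarith
  -- compute the four L values
  have h41 : (4:ℝ) * 1 ^ 2 = 4 := by norm_num
  have h40 : (4:ℝ) * 0 ^ 2 = 0 := by norm_num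
  have h44 : (4:ℝ) * 1 ^ 2 + 4 * 0 ^ 2 = 4 := by norm_num
  have h44' : (4:ℝ) * 0 ^ 2 + 4 * 1 ^ 2 = 4 := by norm_num
  have h48 : (4:ℝ) * 1 ^ 2 + 4 * 1 ^ 2 = 8 := by norm_num
  have h400 : (4:ℝ) * 0 ^ 2 + 4 * 0 ^ 2 = 0 := by norm_num
  have hL10 : L (phi μ) Δ₁ Δ₂ 1 0 = 2 * Δ₁ ^ 2 * (a - b) := by
    rw [L, h44, h41, h40, ← ha_def, ← hb_def]; ring
  have hL01 : L (phi μ) Δ₁ Δ₂ 0 1 = 2 * Δ₂ ^ 2 * (a - b) := by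
    rw [L, h44', h41, h40, ← ha_def, ← hb_def]; ring
  have hL11 : L (phi μ) Δ₁ Δ₂ 1 1 = (a - c) * (Δ₁ ^ 2 + Δ₂ ^ 2) := by
    rw [L, h48, h41, ← ha_def, ← hc_def]; ring
  have hL00 : L (phi μ) Δ₁ Δ₂ 0 0 = 0 := by
    rw [L, h400, h40]; ring
  refine ⟨?_, ?_, ?_⟩
  · rw [hL10, hL11]
    nlinarith [mul_pos hab (sub_pos.mpr hcond'), mul_le_mul_of_nonneg_left hcs
      (le_of_lt (show (0:ℝ) < Δ₁ ^ 2 + Δ₂ ^ 2 by positivity)), sq_nonneg b, mul_pos ha hab]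
  · rw [hL10, hL01]
    nlinarith
  · rw [hL10, hL00]
    positivity
end
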